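/- Suppose u, m : (0,∞) → ℝ are twice differentiable and, with N = 1 − 2m/r, solve the half-strength subsystem r²Nu'' + (2m − (1−u²)²/(2r))u' + u(1−u²) = 0 and m' = (N/2)(u')² + (1−u²)²/(4r²). Define ũ(r) = u(r/√2) and m̃(r) = √2·m(r/√2), and Ñ = 1 − 2m̃/r. Then (ũ, m̃) solves the SU(2) Bartnik–McKinnon system: r²Ñũ'' + (2m̃ − (1−ũ²)²/r)ũ' + ũ(1−ũ²) = 0 and m̃' = Ñ(ũ')² + (1−ũ²)²/(2r²). Hence every solution of the half-strength subsystem is a radially scaled SU(2) Bartnik–McKinnon solution with mass smaller by the factor 1/√2. -/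

import Mathlib

open Set

/-- Every solution of the half-strength subsystem is a radially scaled SU(2)
Bartnik–McKinnon solution: if `(u, m)` solves the half-strength subsystem, then
`ũ(r) = u(r/√2)`, `m̃(r) = √2 m(r/√2)` solves the SU(2) Bartnik–McKinnon
system. -/
theorem half_strength_rescales_to_BM
    (u m : ℝ → ℝ)
    (hu : ∀ r ∈ Ioi (0 : ℝ), DifferentiableAt ℝ u r)
    (hu' : ∀ r ∈ Ioi (0 : ℝ), DifferentiableAt ℝ (deriv u) r)
    (hm : ∀ r ∈ Ioi (0 : ℝ), DifferentiableAt ℝ m r)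
    (hm' : ∀ r ∈ Ioi (0 : ℝ), DifferentiableAt ℝ (deriv m) r)
    (h1 : ∀ r ∈ Ioi (0 : ℝ),
      r ^ 2 * (1 - 2 * m r / r) * deriv (deriv u) r
        + (2 * m r - (1 - u r ^ 2) ^ 2 / (2 * r)) * deriv u r
        + u r * (1 - u r ^ 2) = 0)
    (h2 : ∀ r ∈ Ioi (0 : ℝ),
      deriv m r = (1 - 2 * m r / r) / 2 * (deriv u r) ^ 2
        + (1 - u r ^ 2) ^ 2 / (4 * r ^ 2))
    (ut mt : ℝ → ℝ)
    (hut : ut = fun r => u (r / Real.sqrt 2))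
    (hmt : mt = fun r => Real.sqrt 2 * m (r / Real.sqrt 2)) :
    (∀ r ∈ Ioi (0 : ℝ),
      r ^ 2 * (1 - 2 * mt r / r) * deriv (deriv ut) r
        + (2 * mt r - (1 - ut r ^ 2) ^ 2 / r) * deriv ut r
        + ut r * (1 - ut r ^ 2) = 0) ∧
    (∀ r ∈ Ioi (0 : ℝ),
      deriv mt r = (1 - 2 * mt r / r) * (deriv ut r) ^ 2
        + (1 - ut r ^ 2) ^ 2 / (2 * r ^ 2)) := by

  have hs2 : (0:ℝ) < Real.sqrt 2 := Real.sqrt_pos.mpr (by norm_num)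
  have hsq : Real.sqrt 2 * Real.sqrt 2 = 2 := Real.mul_self_sqrt (by norm_num)
  -- derivative of ut
  have hdut : ∀ r ∈ Ioi (0:ℝ),
      HasDerivAt ut (deriv u (r / Real.sqrt 2) * (Real.sqrt 2)⁻¹) r := by
    intro r hr
    have hsr : r / Real.sqrt 2 ∈ Ioi (0:ℝ) := div_pos hr hs2
    have h0 : HasDerivAt (fun x : ℝ => x / Real.sqrt 2) ((Real.sqrt 2)⁻¹) r := by
      simpa using (hasDerivAt_id r).div_const (Real.sqrt 2)
    have := ((hu _ hsr).hasDerivAt).comp r h0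
    simpa [hut, Function.comp_def] using this
  have hdut_eq : Set.EqOn (deriv ut)
      (fun r => deriv u (r / Real.sqrt 2) * (Real.sqrt 2)⁻¹) (Ioi 0) :=
    fun r hr => (hdut r hr).deriv
  have hddut : ∀ r ∈ Ioi (0:ℝ),
      deriv (deriv ut) r = deriv (deriv u) (r / Real.sqrt 2) * (Real.sqrt 2)⁻¹ * (Real.sqrt 2)⁻¹ := by
    intro r hr
    have hev : deriv ut =ᶠ[nhds r]
        (fun r => deriv u (r / Real.sqrt 2) * (Real.sqrt 2)⁻¹) :=
      Filter.eventuallyEq_of_mem (isOpen_Ioi.mem_nhds hr) hdut_eq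
    rw [hev.deriv_eq]
    have hsr : r / Real.sqrt 2 ∈ Ioi (0:ℝ) := div_pos hr hs2
    have h0 : HasDerivAt (fun x : ℝ => x / Real.sqrt 2) ((Real.sqrt 2)⁻¹) r := by
      simpa using (hasDerivAt_id r).div_const (Real.sqrt 2)
    have h1' := (((hu' _ hsr).hasDerivAt).comp r h0).mul_const ((Real.sqrt 2)⁻¹)
    exact h1'.deriv
  have hdmt : ∀ r ∈ Ioi (0:ℝ), deriv mt r = deriv m (r / Real.sqrt 2) := by
    intro r hr
    have hsr : r / Real.sqrt 2 ∈ Ioi (0:ℝ) := div_pos hr hs2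
    have h0 : HasDerivAt (fun x : ℝ => x / Real.sqrt 2) ((Real.sqrt 2)⁻¹) r := by
      simpa using (hasDerivAt_id r).div_const (Real.sqrt 2)
    have h1' := (((hm _ hsr).hasDerivAt).comp r h0).const_mul (Real.sqrt 2)
    have : HasDerivAt mt (Real.sqrt 2 * (deriv m (r / Real.sqrt 2) * (Real.sqrt 2)⁻¹)) r := by
      simpa [hmt, Function.comp] using h1'
    rw [this.deriv]
    field_simp
  constructor
  · intro r hr
    have hsr : r / Real.sqrt 2 ∈ Ioi (0:ℝ) := div_pos hr hs2
    have e1 := h1 _ hsr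
    have hrne : r ≠ 0 := ne_of_gt hr
    have hsne : Real.sqrt 2 ≠ 0 := ne_of_gt hs2
    rw [hdut_eq hr, hddut r hr, hut, hmt]
    simp only
    set s := r / Real.sqrt 2 with hsdef
    have hrs : r = Real.sqrt 2 * s := by rw [hsdef]; field_simp
    have hsne0 : s ≠ 0 := ne_of_gt hsr
    clear_value s
    rw [hrs]
    field_simp at e1 ⊢
    linear_combination e1 + (2*s*m s*deriv u s + s*u s - s*u s^3 - 2*s^2*m s*deriv (deriv u) s + s^3*deriv (deriv u) s) * hsq
  · intro r hr
    have hsr : r / Real.sqrt 2 ∈ Ioi (0:ℝ) := div_pos hr hs2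
    have e2 := h2 _ hsr
    have hrne : r ≠ 0 := ne_of_gt hr
    have hsne : Real.sqrt 2 ≠ 0 := ne_of_gt hs2
    rw [hdmt r hr, hdut_eq hr, hut, hmt]
    simp only
    set s := r / Real.sqrt 2 with hsdef
    have hrs : r = Real.sqrt 2 * s := by rw [hsdef]; field_simp
    have hsne0 : s ≠ 0 := ne_of_gt hsr
    clear_value s
    rw [hrs]
    field_simp at e2 ⊢
    linear_combination (1/2)*e2 + (2*deriv m s*s^2) * hsq
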